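/- Let 0 < m ≤ L and α ≥ 0, and let f : ℝⁿ → ℝ be differentiable, m-strongly convex, with L-Lipschitz continuous gradient, with minimizer x* (so ∇f(x*) = 0). Let ξ : ℕ → ℝⁿ be the gradient descent iterates ξ_{k+1} = ξ_k − α∇f(ξ_k). Then for all k ≥ 0, ‖ξ_k − x*‖ ≤ (max{|1 − αm|, |1 − αL|})^k · ‖ξ₀ − x*‖. -/

import Mathlib

open scoped RealInnerProductSpace

variable {E : Type*} [NormedAddCommGroup E] [InnerProductSpace ℝ E] [CompleteSpace E]

lemma descent_lemma (L : ℝ) (f : E → ℝ) (f' : E → E)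
    (hdiff : ∀ x, HasGradientAt f (f' x) x)
    (hlip : ∀ x y, ‖f' y - f' x‖ ≤ L * ‖y - x‖) :
    ∀ x y, f y ≤ f x + ⟪f' x, y - x⟫ + L / 2 * ‖y - x‖ ^ 2 := by
  intro x y
  set d := y - x with hd
  have hphi : ∀ t : ℝ, HasDerivAt (fun t : ℝ => f (x + t • d)) ⟪f' (x + t • d), d⟫ t := by
    intro t
    have hγ : HasDerivAt (fun t : ℝ => x + t • d) d t := by
      simpa using ((hasDerivAt_id t).smul_const d).const_add x
    have hf : HasFDerivAt f (InnerProductSpace.toDual ℝ E (f' (x + t • d))) (x + t • d) :=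
      hasGradientAt_iff_hasFDerivAt.mp (hdiff (x + t • d))
    have := hf.comp_hasDerivAt t hγ
    simp only [InnerProductSpace.toDual_apply_apply] at this
    exact this
  set g : ℝ → ℝ := fun t => f x + t * ⟪f' x, d⟫ + L / 2 * (t ^ 2 * ‖d‖ ^ 2) - f (x + t • d)
    with hgdef
  have hg : ∀ t : ℝ, HasDerivAt g (⟪f' x, d⟫ + L * t * ‖d‖ ^ 2 - ⟪f' (x + t • d), d⟫) t := by
    intro t
    have h1 : HasDerivAt (fun t : ℝ => f x + t * ⟪f' x, d⟫ + L / 2 * (t ^ 2 * ‖d‖ ^ 2))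
        (⟪f' x, d⟫ + L * t * ‖d‖ ^ 2) t := by
      have ha : HasDerivAt (fun t : ℝ => t * ⟪f' x, d⟫) ⟪f' x, d⟫ t := by
        simpa using (hasDerivAt_id t).mul_const ⟪f' x, d⟫
      have hb : HasDerivAt (fun t : ℝ => L / 2 * (t ^ 2 * ‖d‖ ^ 2))
          (L / 2 * ((2 * t ^ 1) * ‖d‖ ^ 2)) t := ((hasDerivAt_pow 2 t).mul_const _).const_mul _
      have := (ha.const_add (f x)).add hb
      rw [show ⟪f' x, d⟫ + L * t * ‖d‖ ^ 2 = ⟪f' x, d⟫ + L / 2 * (2 * t ^ 1 * ‖d‖ ^ 2) by ring]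
      exact this
    exact h1.sub (hphi t)
  have mono : MonotoneOn g (Set.Icc (0:ℝ) 1) := by
    apply monotoneOn_of_deriv_nonneg (convex_Icc 0 1)
    · exact (Differentiable.continuous (fun t => (hg t).differentiableAt)).continuousOn
    · intro t _
      exact ((hg t).differentiableAt).differentiableWithinAt
    · intro t ht
      rw [interior_Icc] at ht
      rw [(hg t).deriv]
      have h2 : ⟪f' (x + t • d) - f' x, d⟫ ≤ ‖f' (x + t • d) - f' x‖ * ‖d‖ :=
        real_inner_le_norm _ _
      have h3 : ‖f' (x + t • d) - f' x‖ ≤ L * (t * ‖d‖) := by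
        have := hlip x (x + t • d)
        simpa [norm_smul, abs_of_pos ht.1] using this
      have hd0 : (0:ℝ) ≤ ‖d‖ := norm_nonneg _
      have h4 : ⟪f' (x + t • d) - f' x, d⟫ ≤ L * t * ‖d‖ ^ 2 := by
        calc ⟪f' (x + t • d) - f' x, d⟫ ≤ ‖f' (x + t • d) - f' x‖ * ‖d‖ := h2
        _ ≤ (L * (t * ‖d‖)) * ‖d‖ := by
            apply mul_le_mul_of_nonneg_right h3 hd0
        _ = L * t * ‖d‖ ^ 2 := by ring
      rw [inner_sub_left] at h4
      linarith
  have h01 : g 0 ≤ g 1 := mono (by simp) (by simp) zero_le_one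
  have hg0 : g 0 = 0 := by simp [hgdef]
  have hg1 : g 1 = f x + ⟪f' x, d⟫ + L / 2 * ‖d‖ ^ 2 - f y := by
    simp [hgdef, hd]
  rw [hg0, hg1] at h01
  linarith

omit [CompleteSpace E] in
lemma coco (M : ℝ) (hM : 0 < M) (h : E → ℝ) (h' : E → E)
    (hconv : ∀ x y, h x + ⟪h' x, y - x⟫ ≤ h y)
    (hdesc : ∀ x y, h y ≤ h x + ⟪h' x, y - x⟫ + M / 2 * ‖y - x‖ ^ 2) :
    ∀ x y, ‖h' x - h' y‖ ^ 2 ≤ M * ⟪h' x - h' y, x - y⟫ := by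
  have key : ∀ x y, h x + ⟪h' x, y - x⟫ + 1 / (2 * M) * ‖h' x - h' y‖ ^ 2 ≤ h y := by
    intro x y
    set w := h' x with hw
    set z := h' y with hz
    set p := y + (1 / M) • (w - z) with hp
    have hdescp := hdesc y p
    have hconvp := hconv x p
    have h1 : ⟪z, p - y⟫ = (1 / M) * ⟪z, w - z⟫ := by
      simp [hp, real_inner_smul_right]
    have h2 : ‖p - y‖ ^ 2 = (1 / M) ^ 2 * ‖w - z‖ ^ 2 := by
      have : p - y = (1 / M) • (w - z) := by simp [hp]
      rw [this, norm_smul, Real.norm_eq_abs, abs_of_pos (by positivity : (0:ℝ) < 1 / M)]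
      ring
    have h3 : ⟪w, p - x⟫ = ⟪w, y - x⟫ + (1 / M) * ⟪w, w - z⟫ := by
      have : p - x = (y - x) + (1 / M) • (w - z) := by rw [hp]; abel
      rw [this, inner_add_right, real_inner_smul_right]
    have h4 : ⟪w, w - z⟫ - ⟪z, w - z⟫ = ‖w - z‖ ^ 2 := by
      rw [← inner_sub_left, real_inner_self_eq_norm_sq]
    rw [h1, h2] at hdescp
    rw [h3] at hconvp
    have hM2 : M / 2 * ((1 / M) ^ 2 * ‖w - z‖ ^ 2) = 1 / (2 * M) * ‖w - z‖ ^ 2 := by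
      field_simp
    rw [hM2] at hdescp
    have h5 : 1 / M * ⟪w, w - z⟫ - 1 / M * ⟪z, w - z⟫ = 1 / M * ‖w - z‖ ^ 2 := by
      rw [← mul_sub, h4]
    have h6 : 1 / M * ‖w - z‖ ^ 2 - 1 / (2 * M) * ‖w - z‖ ^ 2 = 1 / (2 * M) * ‖w - z‖ ^ 2 := by
      field_simp
      ring
    linarith [hdescp, hconvp, h5, h6]
  intro x y
  have k1 := key x y
  have k2 := key y x
  have e1 : ⟪h' x, y - x⟫ + ⟪h' y, x - y⟫ = - ⟪h' x - h' y, x - y⟫ := by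
    rw [inner_sub_left]
    have : (y - x : E) = -(x - y) := by abel
    rw [this, inner_neg_right]
    ring
  have e2 : ‖h' y - h' x‖ = ‖h' x - h' y‖ := norm_sub_rev _ _
  rw [e2] at k2
  have : 2 * (1 / (2 * M)) * ‖h' x - h' y‖ ^ 2 ≤ ⟪h' x - h' y, x - y⟫ := by linarith [k1, k2, e1.le, e1.ge]
  have hMne : M ≠ 0 := ne_of_gt hM
  have heq : ‖h' x - h' y‖ ^ 2 = M * (2 * (1 / (2 * M)) * ‖h' x - h' y‖ ^ 2) := by
    field_simp
  rw [heq]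
  exact mul_le_mul_of_nonneg_left this hM.le


set_option maxHeartbeats 1000000 in
/-- Linear convergence of constant-step-size gradient descent for f ∈ S(m, L), at the
rate ρ = max{|1 − αm|, |1 − αL|} obtained from the sector IQC. -/
theorem stmt_9 {n : ℕ} (m L α : ℝ) (hm : 0 < m) (hmL : m ≤ L) (hα : 0 ≤ α)
    (f : EuclideanSpace ℝ (Fin n) → ℝ)
    (f' : EuclideanSpace ℝ (Fin n) → EuclideanSpace ℝ (Fin n))
    (hdiff : ∀ x, HasGradientAt f (f' x) x)
    (hsc : ∀ x y, f y ≥ f x + ⟪f' x, y - x⟫ + (m / 2) * ‖y - x‖ ^ 2)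
    (hlip : ∀ x y, ‖f' y - f' x‖ ≤ L * ‖y - x‖)
    (xstar : EuclideanSpace ℝ (Fin n)) (hstar : f' xstar = 0)
    (ξ : ℕ → EuclideanSpace ℝ (Fin n))
    (hξ : ∀ k, ξ (k + 1) = ξ k - α • f' (ξ k)) :
    ∀ k : ℕ, ‖ξ k - xstar‖ ≤ (max |1 - α * m| |1 - α * L|) ^ k * ‖ξ 0 - xstar‖ := by
  have hdesc_f : ∀ x y, f y ≤ f x + ⟪f' x, y - x⟫ + L / 2 * ‖y - x‖ ^ 2 :=
    descent_lemma L f f' hdiff hlip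
  -- identity used repeatedly
  have hid : ∀ a b : EuclideanSpace ℝ (Fin n),
      ⟪m • a, b - a⟫ + m / 2 * ‖a‖ ^ 2 - m / 2 * ‖b‖ ^ 2 + m / 2 * ‖b - a‖ ^ 2 = 0 := by
    intro a b
    have h1 : ‖b - a‖ ^ 2 = ‖b‖ ^ 2 - 2 * ⟪a, b⟫ + ‖a‖ ^ 2 := by
      rw [norm_sub_sq_real, real_inner_comm]
    rw [real_inner_smul_left, inner_sub_right, real_inner_self_eq_norm_sq, h1]
    ring
  -- sector condition
  have sector : ∀ x, ‖f' x - ((m + L) / 2) • (x - xstar)‖ ≤ (L - m) / 2 * ‖x - xstar‖ := by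
    intro x
    set u : EuclideanSpace ℝ (Fin n) := x - xstar with hu
    set v : EuclideanSpace ℝ (Fin n) := f' x with hv
    set w : EuclideanSpace ℝ (Fin n) := v - m • u with hwdef
    have hw2 : ‖w‖ ^ 2 ≤ (L - m) * ⟪w, u⟫ := by
      rcases eq_or_lt_of_le hmL with heq | hlt
      · -- m = L : w = 0 essentially
        subst heq
        have h1 := hsc x xstar
        have h2 := hsc xstar x
        rw [hstar] at h2
        simp only [inner_zero_left] at h2
        have hsym : ‖xstar - x‖ = ‖x - xstar‖ := norm_sub_rev _ _
        have hneg : ⟪v, xstar - x⟫ = - ⟪v, u⟫ := by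
          rw [show xstar - x = -(x - xstar) by abel, inner_neg_right, hu]
        have hmono : m * ‖u‖ ^ 2 ≤ ⟪v, u⟫ := by
          rw [hsym] at h1
          rw [hneg] at h1
          nlinarith [h1, h2]
        have hnv : ‖v‖ ≤ m * ‖u‖ := by
          have := hlip xstar x
          rw [hstar] at this
          simpa [hv, hu] using this
        have hexp : ‖w‖ ^ 2 = ‖v‖ ^ 2 - 2 * (m * ⟪v, u⟫) + m ^ 2 * ‖u‖ ^ 2 := by
          rw [hwdef, norm_sub_sq_real, real_inner_smul_right, norm_smul,
            Real.norm_eq_abs, abs_of_pos hm]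
          ring
        nlinarith [hexp, hmono, hnv, norm_nonneg v, norm_nonneg u,
          mul_le_mul_of_nonneg_left hmono hm.le]
      · -- m < L : cocoercivity of h = f - m/2 ‖·‖²
        set h : EuclideanSpace ℝ (Fin n) → ℝ := fun z => f z - m / 2 * ‖z‖ ^ 2 with hh
        set h' : EuclideanSpace ℝ (Fin n) → EuclideanSpace ℝ (Fin n) :=
          fun z => f' z - m • z with hh'
        have hconv : ∀ a b, h a + ⟪h' a, b - a⟫ ≤ h b := by
          intro a b
          have h1 := hsc a b
          have h2 := hid a b
          simp only [hh, hh', inner_sub_left]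
          linarith
        have hdesc_h : ∀ a b, h b ≤ h a + ⟪h' a, b - a⟫ + (L - m) / 2 * ‖b - a‖ ^ 2 := by
          intro a b
          have h1 := hdesc_f a b
          have h2 := hid a b
          simp only [hh, hh', inner_sub_left]
          linarith
        have hcoco := coco (L - m) (by linarith) h h' hconv hdesc_h x xstar
        have hww : h' x - h' xstar = w := by
          simp only [hh', hstar, hwdef, hv, hu, smul_sub]
          abel
        rw [hww] at hcoco
        exact hcoco
    have hvc : v - ((m + L) / 2) • u = w - ((L - m) / 2) • u := by
      rw [hwdef]
      module
    have hexp2 : ‖w - ((L - m) / 2) • u‖ ^ 2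
        = ‖w‖ ^ 2 - (L - m) * ⟪w, u⟫ + ((L - m) / 2) ^ 2 * ‖u‖ ^ 2 := by
      rw [norm_sub_sq_real, real_inner_smul_right, norm_smul, Real.norm_eq_abs,
        abs_of_nonneg (by linarith : (0:ℝ) ≤ (L - m) / 2)]
      ring
    have hsq : ‖v - ((m + L) / 2) • u‖ ^ 2 ≤ ((L - m) / 2 * ‖u‖) ^ 2 := by
      rw [hvc, hexp2]
      nlinarith [hw2]
    have hb : (0:ℝ) ≤ (L - m) / 2 * ‖u‖ := by
      apply mul_nonneg (by linarith) (norm_nonneg _)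
    nlinarith [hsq, norm_nonneg (v - ((m + L) / 2) • u), hb]
  -- one-step contraction
  set ρ : ℝ := max |1 - α * m| |1 - α * L| with hρdef
  have hρ0 : 0 ≤ ρ := le_trans (abs_nonneg _) (le_max_left _ _)
  have contraction : ∀ x, ‖x - α • f' x - xstar‖ ≤ ρ * ‖x - xstar‖ := by
    intro x
    set u : EuclideanSpace ℝ (Fin n) := x - xstar with hu
    have hxy : x - α • f' x - xstar
        = (1 - α * ((m + L) / 2)) • u - α • (f' x - ((m + L) / 2) • u) := by
      rw [hu]
      module
    have hmaxb : |1 - α * ((m + L) / 2)| + α * ((L - m) / 2) ≤ ρ := by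
      have hpq : 0 ≤ α * (L - m) := mul_nonneg hα (by linarith)
      rcases abs_cases (1 - α * ((m + L) / 2)) with ⟨e, _⟩ | ⟨e, _⟩
      · have h1 : (1 - α * m) ≤ |1 - α * m| := le_abs_self _
        have h2 : |1 - α * m| ≤ ρ := le_max_left _ _
        rw [e]; linarith
      · have h1 : -(1 - α * L) ≤ |1 - α * L| := neg_le_abs _
        have h2 : |1 - α * L| ≤ ρ := le_max_right _ _
        rw [e]; linarith
    calc ‖x - α • f' x - xstar‖
        = ‖(1 - α * ((m + L) / 2)) • u - α • (f' x - ((m + L) / 2) • u)‖ := by rw [hxy]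
      _ ≤ ‖(1 - α * ((m + L) / 2)) • u‖ + ‖α • (f' x - ((m + L) / 2) • u)‖ :=
          norm_sub_le _ _
      _ = |1 - α * ((m + L) / 2)| * ‖u‖ + α * ‖f' x - ((m + L) / 2) • u‖ := by
          rw [norm_smul, norm_smul, Real.norm_eq_abs, Real.norm_eq_abs, abs_of_nonneg hα]
      _ ≤ |1 - α * ((m + L) / 2)| * ‖u‖ + α * ((L - m) / 2 * ‖u‖) := by
          have := mul_le_mul_of_nonneg_left (sector x) hα
          simp only [← hu] at this
          linarith
      _ = (|1 - α * ((m + L) / 2)| + α * ((L - m) / 2)) * ‖u‖ := by ring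
      _ ≤ ρ * ‖u‖ := mul_le_mul_of_nonneg_right hmaxb (norm_nonneg _)
  intro k
  induction k with
  | zero => simp
  | succ k ih =>
    rw [hξ k]
    calc ‖ξ k - α • f' (ξ k) - xstar‖ ≤ ρ * ‖ξ k - xstar‖ := contraction (ξ k)
      _ ≤ ρ * (ρ ^ k * ‖ξ 0 - xstar‖) := mul_le_mul_of_nonneg_left ih hρ0
      _ = ρ ^ (k + 1) * ‖ξ 0 - xstar‖ := by ring
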